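/- Let δ > 0 and c ≥ 0. If S is a union of k intervals of total length c, then S intersects at most 2k + c/δ pairwise disjoint intervals of length δ. More precisely, for any family of pairwise disjoint intervals each of length δ, the number of intervals in the family meeting S is at most 2k + c/δ. -/
import Mathlib

open Set

/-- ratio (N-1)/(2N) of each half of the middle-1/N Cantor construction -/
noncomputable def cantorRatio (N : ℕ) : ℝ := (N - 1) / (2 * N)

/-- k-th stage C_k of the middle 1/N Cantor set -/
noncomputable def cantorStage (N : ℕ) : ℕ → Set ℝ
  | 0 => Set.Icc 0 1
  | k + 1 => (fun x => cantorRatio N * x) '' cantorStage N k ∪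
      (fun x => cantorRatio N * x + (N + 1) / (2 * N)) '' cantorStage N k

/-- the middle 1/N Cantor set -/
noncomputable def middleCantorSet (N : ℕ) : Set ℝ := ⋂ k, cantorStage N k

/-- number of stages whose removed middle intervals have length at least δ -/
noncomputable def numStages (N : ℕ) (δ : ℝ) : ℕ :=
  sSup {j : ℕ | δ ≤ 1 / N * cantorRatio N ^ (j - 1)}

/-- X_δ : perform only the removal steps removing intervals of length ≥ δ -/
noncomputable def cantorApprox (N : ℕ) (δ : ℝ) : Set ℝ := cantorStage N (numStages N δ)


open MeasureTheory in
lemma key_count {ι : Type*} (δ : ℝ) (a b : ℝ) (hab : a ≤ b)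
    (g : ι → ℝ) (F : Finset ι)
    (hdisj : (F : Set ι).Pairwise (Function.onFun Disjoint fun i => Set.Icc (g i) (g i + δ)))
    (hsub : ∀ i ∈ F, Set.Icc (g i) (g i + δ) ⊆ Set.Icc a b) :
    (F.card : ℝ) * δ ≤ b - a := by
  have h1 : volume (⋃ i ∈ F, Set.Icc (g i) (g i + δ)) = F.card * ENNReal.ofReal δ := by
    rw [measure_biUnion_finset hdisj (fun i _ => measurableSet_Icc)]
    simp [Real.volume_Icc]
  have h2 : volume (⋃ i ∈ F, Set.Icc (g i) (g i + δ)) ≤ volume (Set.Icc a b) :=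
    measure_mono (Set.iUnion₂_subset hsub)
  rw [h1, Real.volume_Icc] at h2
  have h3 : ENNReal.ofReal ((F.card : ℝ) * δ) ≤ ENNReal.ofReal (b - a) := by
    rwa [ENNReal.ofReal_mul (by positivity), ENNReal.ofReal_natCast]
  exact (ENNReal.ofReal_le_ofReal_iff (by linarith)).mp h3

theorem stmt5 (k : ℕ) (c δ : ℝ) (hδ : 0 < δ) (hc : 0 ≤ c)
    (f : Fin k → ℝ × ℝ) (hf : ∀ i, (f i).1 ≤ (f i).2)
    (hsum : ∑ i, ((f i).2 - (f i).1) = c)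
    (ι : Type*) (g : ι → ℝ)
    (hdisj : Pairwise (Function.onFun Disjoint fun i => Set.Icc (g i) (g i + δ))) :
    (Nat.card {i : ι // (Set.Icc (g i) (g i + δ) ∩ ⋃ j, Set.Icc (f j).1 (f j).2).Nonempty} : ℝ) ≤
      2 * k + c / δ := by
  classical
  set T := {i : ι // (Set.Icc (g i) (g i + δ) ∩ ⋃ j, Set.Icc (f j).1 (f j).2).Nonempty} with hT
  by_cases hfin : Finite T
  case neg =>
    haveI : Infinite T := not_finite_iff_infinite.mp hfin
    rw [Nat.card_eq_zero_of_infinite]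
    simp only [Nat.cast_zero]
    positivity
  haveI : Fintype T := Fintype.ofFinite T
  have hx : ∀ t : T, ∃ x, x ∈ Set.Icc (g t.1) (g t.1 + δ) ∧
      ∃ j : Fin k, x ∈ Set.Icc (f j).1 (f j).2 := by
    intro t
    obtain ⟨x, hx1, hx2⟩ := t.2
    rw [Set.mem_iUnion] at hx2
    obtain ⟨j, hj⟩ := hx2
    exact ⟨x, hx1, j, hj⟩
  choose x hx1 j hj using hx
  set cl : T → Fin 3 := fun t =>
    if g t.1 ≤ (f (j t)).1 then 0 else if (f (j t)).2 ≤ g t.1 + δ then 1 else 2 with hcl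
  have hcard : (Finset.univ : Finset T).card =
      ∑ p : Fin k × Fin 3, (Finset.univ.filter (fun t => (j t, cl t) = p)).card :=
    Finset.card_eq_sum_card_fiberwise (fun t _ => Finset.mem_univ _)
  -- class facts
  have hcl0 : ∀ t : T, cl t = 0 → g t.1 ≤ (f (j t)).1 := by
    intro t h
    by_contra hcon
    simp only [hcl, if_neg hcon] at h
    split at h <;> exact absurd h (by decide)
  have hcl1 : ∀ t : T, cl t = 1 → ¬ g t.1 ≤ (f (j t)).1 ∧ (f (j t)).2 ≤ g t.1 + δ := by
    intro t h
    by_cases h0 : g t.1 ≤ (f (j t)).1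
    · simp only [hcl, if_pos h0] at h; exact absurd h (by decide)
    · by_cases h1 : (f (j t)).2 ≤ g t.1 + δ
      · exact ⟨h0, h1⟩
      · simp only [hcl, if_neg h0, if_neg h1] at h; exact absurd h (by decide)
  have hcl2 : ∀ t : T, cl t = 2 → ¬ g t.1 ≤ (f (j t)).1 ∧ ¬ (f (j t)).2 ≤ g t.1 + δ := by
    intro t h
    by_cases h0 : g t.1 ≤ (f (j t)).1
    · simp only [hcl, if_pos h0] at h; exact absurd h (by decide)
    · by_cases h1 : (f (j t)).2 ≤ g t.1 + δ
      · simp only [hcl, if_neg h0, if_pos h1] at h; exact absurd h (by decide)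
      · exact ⟨h0, h1⟩
  -- fiber bounds
  have hfib0 : ∀ jj : Fin k,
      (Finset.univ.filter (fun t : T => (j t, cl t) = (jj, 0))).card ≤ 1 := by
    intro jj
    apply Finset.card_le_one.mpr
    intro t ht t' ht'
    simp only [Finset.mem_filter, Prod.mk.injEq] at ht ht'
    have hm : (f jj).1 ∈ Set.Icc (g t.1) (g t.1 + δ) := by
      rw [← ht.2.1]
      exact ⟨hcl0 t ht.2.2, le_trans (hj t).1 (hx1 t).2⟩
    have hm' : (f jj).1 ∈ Set.Icc (g t'.1) (g t'.1 + δ) := by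
      rw [← ht'.2.1]
      exact ⟨hcl0 t' ht'.2.2, le_trans (hj t').1 (hx1 t').2⟩
    by_contra hne
    have hne' : t.1 ≠ t'.1 := fun h => hne (Subtype.ext h)
    exact Set.disjoint_left.mp (hdisj hne') hm hm'
  have hfib1 : ∀ jj : Fin k,
      (Finset.univ.filter (fun t : T => (j t, cl t) = (jj, 1))).card ≤ 1 := by
    intro jj
    apply Finset.card_le_one.mpr
    intro t ht t' ht'
    simp only [Finset.mem_filter, Prod.mk.injEq] at ht ht'
    have hm : (f jj).2 ∈ Set.Icc (g t.1) (g t.1 + δ) := by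
      rw [← ht.2.1]
      exact ⟨le_trans (hx1 t).1 (hj t).2, (hcl1 t ht.2.2).2⟩
    have hm' : (f jj).2 ∈ Set.Icc (g t'.1) (g t'.1 + δ) := by
      rw [← ht'.2.1]
      exact ⟨le_trans (hx1 t').1 (hj t').2, (hcl1 t' ht'.2.2).2⟩
    by_contra hne
    have hne' : t.1 ≠ t'.1 := fun h => hne (Subtype.ext h)
    exact Set.disjoint_left.mp (hdisj hne') hm hm'
  have hfib2 : ∀ jj : Fin k,
      ((Finset.univ.filter (fun t : T => (j t, cl t) = (jj, 2))).card : ℝ) ≤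
        ((f jj).2 - (f jj).1) / δ := by
    intro jj
    rw [le_div_iff₀ hδ]
    set Fib := Finset.univ.filter (fun t : T => (j t, cl t) = (jj, 2)) with hFib
    have himg : (Fib.image (fun t => t.1)).card = Fib.card :=
      Finset.card_image_of_injective _ Subtype.val_injective
    have := key_count δ (f jj).1 (f jj).2 (hf jj) g (Fib.image (fun t => t.1))
      (fun i _ i' _ hne => hdisj hne) ?_
    · rw [himg] at this; exact this
    · intro i hi
      rw [Finset.mem_image] at hi
      obtain ⟨t, ht, rfl⟩ := hi
      rw [hFib, Finset.mem_filter, Prod.mk.injEq] at ht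
      obtain ⟨h0, h1⟩ := hcl2 t ht.2.2
      rw [ht.2.1] at h0 h1
      exact Set.Icc_subset_Icc (le_of_not_ge h0) (le_of_not_ge h1)
  -- put together
  have hNat : (Nat.card T : ℝ) =
      ∑ p : Fin k × Fin 3, ((Finset.univ.filter (fun t : T => (j t, cl t) = p)).card : ℝ) := by
    rw [Nat.card_eq_fintype_card, ← Finset.card_univ, hcard]
    push_cast
    ring
  rw [hNat]
  rw [Fintype.sum_prod_type]
  have hbound : ∀ jj : Fin k,
      (∑ cc : Fin 3, ((Finset.univ.filter (fun t : T => (j t, cl t) = (jj, cc))).card : ℝ)) ≤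
        2 + ((f jj).2 - (f jj).1) / δ := by
    intro jj
    rw [Fin.sum_univ_three]
    have h0 := hfib0 jj
    have h1 := hfib1 jj
    have h2 := hfib2 jj
    have h0' : ((Finset.univ.filter (fun t : T => (j t, cl t) = (jj, 0))).card : ℝ) ≤ 1 := by
      exact_mod_cast h0
    have h1' : ((Finset.univ.filter (fun t : T => (j t, cl t) = (jj, 1))).card : ℝ) ≤ 1 := by
      exact_mod_cast h1
    linarith
  calc (∑ jj : Fin k, ∑ cc : Fin 3,
        ((Finset.univ.filter (fun t : T => (j t, cl t) = (jj, cc))).card : ℝ))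
      ≤ ∑ jj : Fin k, (2 + ((f jj).2 - (f jj).1) / δ) :=
        Finset.sum_le_sum (fun jj _ => hbound jj)
    _ = 2 * k + c / δ := by
        rw [Finset.sum_add_distrib, ← Finset.sum_div, hsum, Finset.sum_const,
          Finset.card_univ, Fintype.card_fin]
        ring
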